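/- In the ring of polynomials ℚ[X], the family (ν_k)_{k≥2} of rationals satisfying ν_2 = −1 and, for every n ≥ 3, the recursion ∑_{k=2}^{n} (number of compositions of n into k parts) · ν_k = 0, is given by ν_k = (−1)^{k+1}(k−1). Equivalently, the formal power series identity ∑_{k≥2} (−1)^{k+1}(k−1) (X/(1−X))^k = −X² holds in ℚ[[X]]. -/

import Mathlib

/-- The number of compositions of `n` into `k` (positive) parts. -/
noncomputable def compCount (n k : ℕ) : ℕ :=
  Nat.card {c : Fin k → ℕ // (∀ i, 1 ≤ c i) ∧ ∑ i, c i = n}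

open Finset PowerSeries

private lemma compCount_eq {n k : ℕ} (hk : 1 ≤ k) (hkn : k ≤ n) :
    compCount n k = (n - 1).choose (k - 1) := by
  have h3 : k + (n - k) - 1 = n - 1 := by omega
  have h4 : n - k = (n - 1) - (k - 1) := by omega
  have h7 : k - 1 ≤ n - 1 := by omega
  have e1 : {P : Fin k → ℕ // ∑ i, P i = n - k} ≃
      {c : Fin k → ℕ // (∀ i, 1 ≤ c i) ∧ ∑ i, c i = n} :=
    { toFun := fun P => ⟨fun i => P.1 i + 1, fun i => Nat.le_add_left 1 _, by
        rw [Finset.sum_add_distrib, P.2, Finset.sum_const, Finset.card_univ,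
          Fintype.card_fin, smul_eq_mul, mul_one]
        omega⟩
      invFun := fun c => ⟨fun i => c.1 i - 1, by
        obtain ⟨c, hc1, hc2⟩ := c
        show ∑ i, (c i - 1) = n - k
        have h : ∑ i, c i = (∑ i, (c i - 1)) + k := by
          calc ∑ i, c i = ∑ i, ((c i - 1) + 1) :=
                Finset.sum_congr rfl fun i _ => (Nat.sub_add_cancel (hc1 i)).symm
            _ = (∑ i, (c i - 1)) + ∑ _i : Fin k, (1 : ℕ) := Finset.sum_add_distrib
            _ = (∑ i, (c i - 1)) + k := by simp
        omega⟩
      left_inv := fun P => Subtype.ext (funext fun i => by simp)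
      right_inv := fun c => Subtype.ext (funext fun i => Nat.sub_add_cancel (c.2.1 i)) }
  have h2 : compCount n k = Nat.card {P : Fin k → ℕ // ∑ i, P i = n - k} :=
    (Nat.card_congr e1).symm
  have h5 : Nat.card {P : Fin k → ℕ // ∑ i, P i = n - k} = Nat.card (Sym (Fin k) (n - k)) :=
    Nat.card_congr (Sym.equivNatSumOfFintype (Fin k) (n - k)).symm
  have h6 : Nat.card (Sym (Fin k) (n - k)) = (k + (n - k) - 1).choose (n - k) := by
    rw [Nat.card_eq_fintype_card, Sym.card_sym_eq_choose, Fintype.card_fin]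
  rw [h2, h5, h6, h3, h4, Nat.choose_symm h7]

private lemma alt_sum (m : ℕ) (hm : m ≠ 0) :
    ∑ i ∈ range (m + 1), ((-1 : ℚ)) ^ i * (m.choose i) = 0 := by
  have h := Int.alternating_sum_range_choose_of_ne hm
  have h2 : ((∑ i ∈ range (m + 1), ((-1) ^ i * m.choose i : ℤ) : ℤ) : ℚ) = 0 := by
    rw [h]; simp
  push_cast at h2
  exact h2

private lemma key (n : ℕ) (hn : 3 ≤ n) :
    ∑ k ∈ Icc 2 n, ((n - 1).choose (k - 1) : ℚ) * ((-1) ^ (k + 1) * ((k : ℚ) - 1)) = 0 := by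
  rw [show Icc 2 n = Ico 2 (n + 1) from by rw [Finset.Ico_add_one_right_eq_Icc],
    Finset.sum_Ico_eq_sum_range, show n + 1 - 2 = (n - 2) + 1 by omega]
  have hstep : ∀ i ∈ range (n - 2 + 1),
      ((n - 1).choose (2 + i - 1) : ℚ) * ((-1) ^ (2 + i + 1) * (((2 + i : ℕ) : ℚ) - 1))
        = (-((n - 1 : ℕ) : ℚ)) * ((-1) ^ i * ((n - 2).choose i : ℚ)) := by
    intro i _
    have hnat : (n - 1) * (n - 2).choose i = (n - 1).choose (i + 1) * (i + 1) := by
      have h := Nat.add_one_mul_choose_eq (n - 2) i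
      rwa [show n - 2 + 1 = n - 1 by omega] at h
    have hQ : ((n - 1 : ℕ) : ℚ) * ((n - 2).choose i : ℚ)
        = ((n - 1).choose (i + 1) : ℚ) * ((i : ℚ) + 1) := by
      exact_mod_cast congrArg (Nat.cast : ℕ → ℚ) hnat
    rw [show 2 + i - 1 = i + 1 by omega,
      show ((-1 : ℚ)) ^ (2 + i + 1) = -(-1) ^ i by
        rw [show 2 + i + 1 = i + 3 by omega, pow_add]; norm_num,
      show (((2 + i : ℕ) : ℚ) - 1) = (i : ℚ) + 1 by push_cast; ring]
    linear_combination ((-1 : ℚ) ^ i) * hQ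
  rw [Finset.sum_congr rfl hstep, ← Finset.mul_sum,
    show n - 2 + 1 = (n - 2) + 1 from rfl, alt_sum (n - 2) (by omega), mul_zero]

private lemma formula_rec (n : ℕ) (hn : 3 ≤ n) :
    ∑ k ∈ Icc 2 n, (compCount n k : ℚ) * ((-1) ^ (k + 1) * ((k : ℚ) - 1)) = 0 := by
  rw [← key n hn]
  refine Finset.sum_congr rfl fun k hk => ?_
  rw [Finset.mem_Icc] at hk
  rw [compCount_eq (by omega) hk.2]

private lemma one_sub_X_inv : (1 - PowerSeries.X : PowerSeries ℚ)⁻¹ = PowerSeries.mk 1 := by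
  rw [PowerSeries.inv_eq_iff_mul_eq_one (by simp)]
  exact PowerSeries.mk_one_mul_one_sub_eq_one ℚ

private lemma coeff_term {n k : ℕ} (hk : 1 ≤ k) (hkn : k ≤ n) (a : ℚ) :
    PowerSeries.coeff (R := ℚ) n (PowerSeries.C (R := ℚ) a * (PowerSeries.X * (1 - PowerSeries.X)⁻¹) ^ k)
      = a * ((n - 1).choose (k - 1) : ℚ) := by
  obtain ⟨d, rfl⟩ : ∃ d, k = d + 1 := ⟨k - 1, by omega⟩
  rw [one_sub_X_inv, mul_pow, PowerSeries.coeff_C_mul,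
    PowerSeries.mk_one_pow_eq_mk_choose_add, PowerSeries.coeff_X_pow_mul', if_pos hkn,
    PowerSeries.coeff_mk]
  rw [show d + (n - (d + 1)) = n - 1 by omega, show d + 1 - 1 = d from rfl]

theorem nu_W_values :
    (∀ ν : ℕ → ℚ, ν 2 = -1 →
      (∀ n : ℕ, 3 ≤ n → ∑ k ∈ Finset.Icc 2 n, (compCount n k : ℚ) * ν k = 0) →
      ∀ k : ℕ, 2 ≤ k → ν k = (-1) ^ (k + 1) * ((k : ℚ) - 1)) ∧
    (∀ n : ℕ,
      ∑ k ∈ Finset.Icc 2 n,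
          (PowerSeries.coeff (R := ℚ) n)
            (PowerSeries.C (R := ℚ) ((-1) ^ (k + 1) * ((k : ℚ) - 1)) *
              (PowerSeries.X * (1 - PowerSeries.X)⁻¹) ^ k) =
        (PowerSeries.coeff (R := ℚ) n) (-(PowerSeries.X ^ 2))) := by
  constructor
  · intro ν h2 hrec k
    induction k using Nat.strong_induction_on with
    | _ k ih =>
      intro hk
      rcases eq_or_lt_of_le hk with rfl | hk3
      · rw [h2]; norm_num
      · obtain ⟨m, rfl⟩ : ∃ m, k = m + 1 := ⟨k - 1, by omega⟩
        have hm : 2 ≤ m := by omega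
        have e1 := hrec (m + 1) (by omega)
        rw [Finset.sum_Icc_succ_top (by omega)] at e1
        have e2 := formula_rec (m + 1) (by omega)
        rw [Finset.sum_Icc_succ_top (by omega)] at e2
        have hS : ∑ j ∈ Icc 2 m, (compCount (m + 1) j : ℚ) * ν j
            = ∑ j ∈ Icc 2 m, (compCount (m + 1) j : ℚ) * ((-1) ^ (j + 1) * ((j : ℚ) - 1)) := by
          refine Finset.sum_congr rfl fun j hj => ?_
          rw [Finset.mem_Icc] at hj
          rw [ih j (by omega) (by omega)]
        have hcc : (compCount (m + 1) (m + 1) : ℚ) = 1 := by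
          rw [compCount_eq (by omega) le_rfl]; simp
        rw [hcc, one_mul] at e1 e2
        rw [hS] at e1
        linarith
  · intro n
    rcases lt_or_ge n 2 with h | h
    · interval_cases n <;> simp [PowerSeries.coeff_X_pow]
    rcases eq_or_lt_of_le h with rfl | h3
    · rw [Finset.Icc_self, Finset.sum_singleton, coeff_term (by norm_num) le_rfl]
      norm_num [PowerSeries.coeff_X_pow]
    · have h3' : 3 ≤ n := h3
      have hsum : ∑ k ∈ Icc 2 n,
            (PowerSeries.coeff (R := ℚ) n)
              (PowerSeries.C (R := ℚ) ((-1) ^ (k + 1) * ((k : ℚ) - 1)) *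
                (PowerSeries.X * (1 - PowerSeries.X)⁻¹) ^ k)
          = ∑ k ∈ Icc 2 n,
              ((-1 : ℚ)) ^ (k + 1) * ((k : ℚ) - 1) * ((n - 1).choose (k - 1) : ℚ) := by
        refine Finset.sum_congr rfl fun k hk => ?_
        rw [Finset.mem_Icc] at hk
        exact coeff_term (by omega) hk.2 _
      rw [hsum]
      have hz : ∑ k ∈ Icc 2 n,
          ((-1 : ℚ)) ^ (k + 1) * ((k : ℚ) - 1) * ((n - 1).choose (k - 1) : ℚ) = 0 := by
        rw [← key n h3']
        exact Finset.sum_congr rfl fun k _ => mul_comm _ _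
      rw [hz]
      simp [PowerSeries.coeff_X_pow, show n ≠ 2 by omega]
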